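/- Let X be a normed space (real or complex regarded as a real normed space). For nonempty closed bounded convex sets A, B ⊆ X and t ∈ [0,1], define Σ(A,B,t) = closure((1−t)A + tB). Then Σ is a consistent geodesic bicombing on CB(X) with the Hausdorff metric; in particular Σ(closure((1−r)A+rB), closure((1−s)A+sB), t) = Σ(A,B,(1−t)r+ts) for all r,s,t ∈ [0,1] with r < s. -/

import Mathlib

open Pointwise

/-- The element of CB(X): nonempty, closed, bounded, convex. -/
def MemCB {X : Type*} [NormedAddCommGroup X] [NormedSpace ℝ X] (A : Set X) : Prop :=
  A.Nonempty ∧ IsClosed A ∧ Bornology.IsBounded A ∧ Convex ℝ A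

section Aux

open Metric Set

variable {X : Type*} [NormedAddCommGroup X] [NormedSpace ℝ X]

lemma aux_smul_closure_subset (c : ℝ) (S : Set X) : c • closure S ⊆ closure (c • S) := by
  rw [← Set.image_smul, ← Set.image_smul]
  exact image_closure_subset_closure_image (continuous_const_smul c)

lemma aux_closure_add_subset (S T : Set X) : closure S + closure T ⊆ closure (S + T) := by
  rintro x ⟨a, ha, b, hb, rfl⟩
  exact map_mem_closure₂ continuous_add ha hb fun c hc d hd => Set.add_mem_add hc hd

lemma aux_closure_smul_add (c d : ℝ) (S T : Set X) :
    closure (c • closure S + d • closure T) = closure (c • S + d • T) := by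
  apply Subset.antisymm
  · apply closure_minimal _ isClosed_closure
    calc c • closure S + d • closure T
        ⊆ closure (c • S) + closure (d • T) :=
          Set.add_subset_add (aux_smul_closure_subset c S) (aux_smul_closure_subset d T)
      _ ⊆ closure (c • S + d • T) := aux_closure_add_subset _ _
  · exact closure_mono (Set.add_subset_add
      (Set.smul_set_mono subset_closure) (Set.smul_set_mono subset_closure))

/-- MemCB is preserved. -/
lemma aux_memCB {A B : Set X} (hA : MemCB A) (hB : MemCB B) {t : ℝ}
    (ht0 : (0:ℝ) ≤ t) (ht1 : t ≤ 1) : MemCB (closure ((1 - t) • A + t • B)) := by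
  refine ⟨((hA.1.smul_set.add hB.1.smul_set)).closure, isClosed_closure, ?_, ?_⟩
  · exact ((hA.2.2.1.smul₀ (1 - t)).add (hB.2.2.1.smul₀ t)).closure
  · exact ((hA.2.2.2.smul _).add (hB.2.2.2.smul _)).closure

/-- Key algebraic identity for consistency, using convexity. -/
lemma aux_alg {A B : Set X} (hA : Convex ℝ A) (hB : Convex ℝ B) {r s t : ℝ}
    (hr0 : 0 ≤ r) (hr1 : r ≤ 1) (hs0 : 0 ≤ s) (hs1 : s ≤ 1) (ht0 : 0 ≤ t) (ht1 : t ≤ 1) :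
    (1 - t) • ((1 - r) • A + r • B) + t • ((1 - s) • A + s • B) =
      (1 - ((1 - t) * r + t * s)) • A + ((1 - t) * r + t * s) • B := by
  have h1 : (0:ℝ) ≤ (1 - t) * (1 - r) := mul_nonneg (by linarith) (by linarith)
  have h2 : (0:ℝ) ≤ t * (1 - s) := mul_nonneg ht0 (by linarith)
  have h3 : (0:ℝ) ≤ (1 - t) * r := mul_nonneg (by linarith) hr0
  have h4 : (0:ℝ) ≤ t * s := mul_nonneg ht0 hs0
  calc (1 - t) • ((1 - r) • A + r • B) + t • ((1 - s) • A + s • B)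
      = (((1 - t) * (1 - r)) • A + ((1 - t) * r) • B) +
        ((t * (1 - s)) • A + (t * s) • B) := by
        rw [smul_add, smul_add, smul_smul, smul_smul, smul_smul, smul_smul]
    _ = (((1 - t) * (1 - r)) • A + (t * (1 - s)) • A) +
        (((1 - t) * r) • B + (t * s) • B) := add_add_add_comm _ _ _ _
    _ = ((1 - t) * (1 - r) + t * (1 - s)) • A + ((1 - t) * r + t * s) • B := by
        rw [hA.add_smul h1 h2, hB.add_smul h3 h4]
    _ = (1 - ((1 - t) * r + t * s)) • A + ((1 - t) * r + t * s) • B := by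
        rw [show (1 - t) * (1 - r) + t * (1 - s) = 1 - ((1 - t) * r + t * s) by ring]

/-- Upper bound for the Hausdorff distance between points on the segment. -/
lemma aux_upper {A B : Set X} (hA : MemCB A) (hB : MemCB B) {s t : ℝ}
    (hs0 : 0 ≤ s) (ht1 : t ≤ 1) (hst : s ≤ t) :
    hausdorffDist (closure ((1 - s) • A + s • B)) (closure ((1 - t) • A + t • B)) ≤
      (t - s) * hausdorffDist A B := by
  rw [hausdorffDist_closure]
  rcases eq_or_lt_of_le hst with rfl | hlt
  · simp [hausdorffDist_self_zero, hausdorffDist_nonneg]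
  have hfin : EMetric.hausdorffEdist A B ≠ ⊤ :=
    hausdorffEdist_ne_top_of_nonempty_of_bounded hA.1 hB.1 hA.2.2.1 hB.2.2.1
  have hfin' : EMetric.hausdorffEdist B A ≠ ⊤ := fun h => hfin (by rw [← h]; exact EMetric.hausdorffEdist_comm)
  set d := hausdorffDist A B with hd
  have hd0 : 0 ≤ d := hausdorffDist_nonneg
  have hts : 0 < t - s := by linarith
  have ht0 : 0 < t := by linarith
  have hs1 : s < 1 := by linarith
  apply le_of_forall_pos_le_add
  intro δ hδ
  have hε : 0 < δ / (t - s) := div_pos hδ hts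
  apply hausdorffDist_le_of_mem_dist (by positivity)
  · -- forward direction
    rintro x ⟨u, hu, v, hv, rfl⟩
    obtain ⟨a, ha, rfl⟩ := hu
    obtain ⟨b, hb, rfl⟩ := hv
    have hia : infDist a B ≤ d := infDist_le_hausdorffDist_of_mem ha hfin
    obtain ⟨b', hb', hab'⟩ : ∃ y ∈ B, dist a y < d + δ / (t - s) :=
      (infDist_lt_iff hB.1).mp (lt_of_le_of_lt hia (by linarith))
    refine ⟨(1 - t) • a + ((t - s) • b' + s • b), ?_, ?_⟩
    · refine Set.add_mem_add (Set.smul_mem_smul_set ha) ?_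
      refine Set.mem_smul_set.mpr ⟨((t - s) / t) • b' + (s / t) • b, ?_, ?_⟩
      · exact hB.2.2.2 hb' hb (div_nonneg hts.le ht0.le) (div_nonneg hs0 ht0.le)
          (by rw [← add_div, show t - s + s = t by ring, div_self ht0.ne'])
      · rw [smul_add, smul_smul, smul_smul, mul_div_cancel₀ _ ht0.ne',
          mul_div_cancel₀ _ ht0.ne']
    · rw [dist_eq_norm, show ((1 - s) • a + s • b) - ((1 - t) • a + ((t - s) • b' + s • b))
        = (t - s) • (a - b') by module, norm_smul, Real.norm_eq_abs, abs_of_pos hts]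
      have : ‖a - b'‖ = dist a b' := (dist_eq_norm a b').symm
      rw [this]
      calc (t - s) * dist a b' ≤ (t - s) * (d + δ / (t - s)) := by
            exact mul_le_mul_of_nonneg_left hab'.le hts.le
        _ = (t - s) * d + δ := by rw [mul_add, mul_div_cancel₀ _ hts.ne']
  · -- backward direction
    rintro x ⟨u, hu, v, hv, rfl⟩
    obtain ⟨a, ha, rfl⟩ := hu
    obtain ⟨b, hb, rfl⟩ := hv
    have hib : infDist b A ≤ d := by
      have := infDist_le_hausdorffDist_of_mem hb hfin'
      rwa [hausdorffDist_comm] at this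
    obtain ⟨a', ha', hba'⟩ : ∃ y ∈ A, dist b y < d + δ / (t - s) :=
      (infDist_lt_iff hA.1).mp (lt_of_le_of_lt hib (by linarith))
    refine ⟨((1 - t) • a + (t - s) • a') + s • b, ?_, ?_⟩
    · refine Set.add_mem_add ?_ (Set.smul_mem_smul_set hb)
      refine Set.mem_smul_set.mpr ⟨((1 - t) / (1 - s)) • a + ((t - s) / (1 - s)) • a', ?_, ?_⟩
      · exact hA.2.2.2 ha ha' (div_nonneg (by linarith) (by linarith))
          (div_nonneg hts.le (by linarith))
          (by rw [← add_div, show 1 - t + (t - s) = 1 - s by ring,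
            div_self (by linarith : (1:ℝ) - s ≠ 0)])
      · rw [smul_add, smul_smul, smul_smul, mul_div_cancel₀ _ (by linarith : (1:ℝ) - s ≠ 0),
          mul_div_cancel₀ _ (by linarith : (1:ℝ) - s ≠ 0)]
    · rw [dist_eq_norm, show ((1 - t) • a + t • b) - (((1 - t) • a + (t - s) • a') + s • b)
        = (t - s) • (b - a') by module, norm_smul, Real.norm_eq_abs, abs_of_pos hts]
      have : ‖b - a'‖ = dist b a' := (dist_eq_norm b a').symm
      rw [this]
      calc (t - s) * dist b a' ≤ (t - s) * (d + δ / (t - s)) := by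
            exact mul_le_mul_of_nonneg_left hba'.le hts.le
        _ = (t - s) * d + δ := by rw [mul_add, mul_div_cancel₀ _ hts.ne']

end Aux

/-- Σ(A,B,t) = closure((1−t)A + tB) is a consistent geodesic
bicombing on CB(X) with the Hausdorff metric. -/
theorem minkowski_bicombing_consistent {X : Type*} [NormedAddCommGroup X]
    [NormedSpace ℝ X]
    (Sig : Set X → Set X → ℝ → Set X)
    (hSig : Sig = fun A B t => closure ((1 - t) • A + t • B)) :
    ∀ A B : Set X, MemCB A → MemCB B →
      (∀ t ∈ Set.Icc (0:ℝ) 1, MemCB (Sig A B t)) ∧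
      Sig A B 0 = A ∧ Sig A B 1 = B ∧
      (∀ s ∈ Set.Icc (0:ℝ) 1, ∀ t ∈ Set.Icc (0:ℝ) 1,
        Metric.hausdorffDist (Sig A B s) (Sig A B t) =
          |t - s| * Metric.hausdorffDist A B) ∧
      (∀ r ∈ Set.Icc (0:ℝ) 1, ∀ s ∈ Set.Icc (0:ℝ) 1, ∀ t ∈ Set.Icc (0:ℝ) 1,
        r < s → Sig (Sig A B r) (Sig A B s) t = Sig A B ((1 - t) * r + t * s)) := by
  subst hSig
  intro A B hA hB
  have hmem : ∀ t ∈ Set.Icc (0:ℝ) 1, MemCB (closure ((1 - t) • A + t • B)) :=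
    fun t ht => aux_memCB hA hB ht.1 ht.2
  have h0 : closure ((1 - (0:ℝ)) • A + (0:ℝ) • B) = A := by
    rw [show (1:ℝ) - 0 = 1 by norm_num, one_smul, Set.zero_smul_set hB.1, add_zero,
      hA.2.1.closure_eq]
  have h1 : closure ((1 - (1:ℝ)) • A + (1:ℝ) • B) = B := by
    rw [show (1:ℝ) - 1 = 0 by norm_num, one_smul, Set.zero_smul_set hA.1, zero_add,
      hB.2.1.closure_eq]
  have hfinS : ∀ s ∈ Set.Icc (0:ℝ) 1, ∀ t ∈ Set.Icc (0:ℝ) 1,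
      EMetric.hausdorffEdist (closure ((1 - s) • A + s • B))
        (closure ((1 - t) • A + t • B)) ≠ ⊤ := by
    intro s hs t ht
    exact Metric.hausdorffEdist_ne_top_of_nonempty_of_bounded (hmem s hs).1 (hmem t ht).1
      (hmem s hs).2.2.1 (hmem t ht).2.2.1
  -- geodesic property for s ≤ t
  have geo : ∀ s ∈ Set.Icc (0:ℝ) 1, ∀ t ∈ Set.Icc (0:ℝ) 1, s ≤ t →
      Metric.hausdorffDist (closure ((1 - s) • A + s • B)) (closure ((1 - t) • A + t • B)) =
        (t - s) * Metric.hausdorffDist A B := by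
    intro s hs t ht hst
    apply le_antisymm (aux_upper hA hB hs.1 ht.2 hst)
    -- lower bound via triangle inequality through the endpoints
    have i0 : (0:ℝ) ∈ Set.Icc (0:ℝ) 1 := ⟨le_rfl, zero_le_one⟩
    have i1 : (1:ℝ) ∈ Set.Icc (0:ℝ) 1 := ⟨zero_le_one, le_rfl⟩
    have u1 : Metric.hausdorffDist (closure ((1 - (0:ℝ)) • A + (0:ℝ) • B))
        (closure ((1 - s) • A + s • B)) ≤ (s - 0) * Metric.hausdorffDist A B :=
      aux_upper hA hB le_rfl hs.2 hs.1
    have u2 : Metric.hausdorffDist (closure ((1 - t) • A + t • B))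
        (closure ((1 - (1:ℝ)) • A + (1:ℝ) • B)) ≤ (1 - t) * Metric.hausdorffDist A B :=
      aux_upper hA hB ht.1 le_rfl ht.2
    have tri1 : Metric.hausdorffDist (closure ((1 - (0:ℝ)) • A + (0:ℝ) • B))
        (closure ((1 - (1:ℝ)) • A + (1:ℝ) • B)) ≤
        Metric.hausdorffDist (closure ((1 - (0:ℝ)) • A + (0:ℝ) • B))
          (closure ((1 - s) • A + s • B)) +
        Metric.hausdorffDist (closure ((1 - s) • A + s • B))
          (closure ((1 - (1:ℝ)) • A + (1:ℝ) • B)) :=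
      Metric.hausdorffDist_triangle (hfinS 0 i0 s hs)
    have tri2 : Metric.hausdorffDist (closure ((1 - s) • A + s • B))
        (closure ((1 - (1:ℝ)) • A + (1:ℝ) • B)) ≤
        Metric.hausdorffDist (closure ((1 - s) • A + s • B))
          (closure ((1 - t) • A + t • B)) +
        Metric.hausdorffDist (closure ((1 - t) • A + t • B))
          (closure ((1 - (1:ℝ)) • A + (1:ℝ) • B)) :=
      Metric.hausdorffDist_triangle (hfinS s hs t ht)
    have hD : Metric.hausdorffDist (closure ((1 - (0:ℝ)) • A + (0:ℝ) • B))
        (closure ((1 - (1:ℝ)) • A + (1:ℝ) • B)) = Metric.hausdorffDist A B := by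
      rw [h0, h1]
    linarith
  refine ⟨hmem, h0, h1, ?_, ?_⟩
  · -- geodesic property, general s t
    intro s hs t ht
    rcases le_total s t with hst | hst
    · rw [geo s hs t ht hst, abs_of_nonneg (by linarith : (0:ℝ) ≤ t - s)]
    · rw [Metric.hausdorffDist_comm, geo t ht s hs hst,
        abs_of_nonpos (by linarith : t - s ≤ 0)]
      ring_nf
  · -- consistency
    intro r hr s hs t ht _
    simp only
    rw [aux_closure_smul_add]
    rw [aux_alg hA.2.2.2 hB.2.2.2 hr.1 hr.2 hs.1 hs.2 ht.1 ht.2]
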